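/- For every strict partition γ, every n, and every T ∈ SSHT_n(γ) such that T has at least one entry equal to 1 and no entry equal to 2', the queer lowering operator f_0* applied to T (which changes the rightmost 1 in T to 2' if that cell is not on the main diagonal, and to 2 if it is on the main diagonal) yields a semistandard shifted tableau of shape γ, and its weight is obtained from wt(T) by decreasing the first part by 1 and increasing the second part by 1. -/

import Mathlib

/-! ## Strict partitions and shifted diagrams (French convention, 1-indexed).

A marked entry `i'` is encoded as `2*i - 1` and an unmarked entry `i` as `2*i`;
the value `0` denotes an empty cell / a cell outside the diagram.  The total
order `1' < 1 < 2' < 2 < ⋯` then coincides with the usual order on `ℕ`. -/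

/-- A strict partition: a strictly decreasing list of positive integers. -/
def StrictPartition (γ : List ℕ) : Prop :=
  γ.Chain' (· > ·) ∧ ∀ x ∈ γ, 0 < x

/-- The `r`-th part (1-indexed) of a partition given as a list. -/
def part (γ : List ℕ) (r : ℕ) : ℕ := γ.getD (r - 1) 0

/-- The cell `(r, c)` (row `r` indexed from the bottom, column `c`, both 1-indexed)
belongs to the shifted diagram of `γ`: row `r` has `γ_r` cells, with its leftmost
cell on the main diagonal `c = r`. -/
def ShiftedShape (γ : List ℕ) (rc : ℕ × ℕ) : Prop :=
  1 ≤ rc.1 ∧ rc.1 ≤ γ.length ∧ rc.1 ≤ rc.2 ∧ rc.2 < rc.1 + part γ rc.1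

instance (γ : List ℕ) (rc : ℕ × ℕ) : Decidable (ShiftedShape γ rc) := by
  unfold ShiftedShape; infer_instance

/-- A common bound for all row and column indices of cells of the (shifted) diagram. -/
def colBound (γ : List ℕ) : ℕ := γ.length + γ.foldr max 0

/-- The cells of the shifted diagram of `γ`, as a finite set. -/
def shapeCells (γ : List ℕ) : Finset (ℕ × ℕ) :=
  (Finset.range (colBound γ + 1) ×ˢ Finset.range (colBound γ + 1)).filter
    (fun rc => ShiftedShape γ rc)

/-- A semistandard shifted tableau of shape `γ` with entries in
`{1' < 1 < 2' < 2 < ⋯ < n' < n}` (encoded as `{1, 2, …, 2n}`): entries weakly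
increase along rows (eastward) and columns (northward, i.e. increasing row
index), with at most one unmarked `i` per column, at most one marked `i'` per
row, and no marked entries on the main diagonal. -/
structure SSHT (n : ℕ) (γ : List ℕ) where
  entry : ℕ × ℕ → ℕ
  zero_outside : ∀ rc, ¬ ShiftedShape γ rc → entry rc = 0
  pos : ∀ rc, ShiftedShape γ rc → 1 ≤ entry rc
  le_two_n : ∀ rc, ShiftedShape γ rc → entry rc ≤ 2 * n
  row_mono : ∀ r c c', c < c' → ShiftedShape γ (r, c) → ShiftedShape γ (r, c') →
    entry (r, c) ≤ entry (r, c')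
  col_mono : ∀ r r' c, r < r' → ShiftedShape γ (r, c) → ShiftedShape γ (r', c) →
    entry (r, c) ≤ entry (r', c)
  col_unmarked : ∀ r r' c, r < r' → ShiftedShape γ (r, c) → ShiftedShape γ (r', c) →
    entry (r, c) = entry (r', c) → entry (r, c) % 2 = 1
  row_marked : ∀ r c c', c < c' → ShiftedShape γ (r, c) → ShiftedShape γ (r, c') →
    entry (r, c) = entry (r, c') → entry (r, c) % 2 = 0
  diag_unmarked : ∀ r, ShiftedShape γ (r, r) → entry (r, r) % 2 = 0

/-- The weight of a filling of the shifted diagram of `γ`: `wtFun γ f k` is the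
number of cells whose entry equals `k` or `k'` (encoded `2k` or `2k-1`). -/
def wtFun (γ : List ℕ) (f : ℕ × ℕ → ℕ) (k : ℕ) : ℕ :=
  ((shapeCells γ).filter (fun rc => f rc = 2 * k - 1 ∨ f rc = 2 * k)).card

/-! ## The queer lowering operator `f_0*`. -/

/-- The cell of the rightmost unmarked entry `1` (encoded `2`) of `T`, if any. -/
def rightmostOne {n : ℕ} {γ : List ℕ} (T : SSHT n γ) : Option (ℕ × ℕ) :=
  (((List.range (colBound γ + 1)).flatMap (fun r =>
      (List.range (colBound γ + 1)).map (fun c => (r, c)))).filter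
    (fun rc => decide (ShiftedShape γ rc) && decide (T.entry rc = 2))).foldr
    (fun a b => match b with
      | none => some a
      | some b' => if b'.2 ≤ a.2 then some a else some b') none

/-- The queer lowering operator `f_0*`, described on underlying fillings:
`queerLowerFun T = none` when `f_0*(T) = 0` (no entry `1`, or some entry `2'`);
otherwise the rightmost `1` becomes `2'` off the main diagonal and `2` on it. -/
def queerLowerFun {n : ℕ} {γ : List ℕ} (T : SSHT n γ) : Option (ℕ × ℕ → ℕ) :=
  if ∃ rc ∈ shapeCells γ, T.entry rc = 3 then none
  else
    match rightmostOne T with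
    | none => none
    | some (r, c) =>
      some (fun rc => if rc = (r, c) then (if r = c then 4 else 3) else T.entry rc)

/-! ## Auxiliary lemmas -/

lemma foldr_max_le' {l : List ℕ} {x : ℕ} (hx : x ∈ l) : x ≤ l.foldr max 0 := by
  induction l with
  | nil => simp at hx
  | cons a t ih =>
    rcases List.mem_cons.mp hx with h | h
    · subst h; exact le_max_left _ _
    · exact le_trans (ih h) (le_max_right _ _)

lemma shape_bounds {γ : List ℕ} {rc : ℕ × ℕ} (h : ShiftedShape γ rc) :
    rc.1 < colBound γ + 1 ∧ rc.2 < colBound γ + 1 := by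
  obtain ⟨h1, h2, h3, h4⟩ := h
  have hpart : part γ rc.1 ≤ γ.foldr max 0 := by
    unfold part
    rcases Nat.lt_or_ge (rc.1 - 1) γ.length with hlt | hge
    · have hm : γ.getD (rc.1 - 1) 0 ∈ γ := by
        rw [List.getD_eq_getElem _ _ hlt]; exact List.getElem_mem _
      exact foldr_max_le' hm
    · rw [List.getD_eq_default _ _ hge]
      exact Nat.zero_le _
  unfold colBound
  omega

lemma mem_shapeCells {γ : List ℕ} {rc : ℕ × ℕ} :
    rc ∈ shapeCells γ ↔ ShiftedShape γ rc := by
  unfold shapeCells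
  simp only [Finset.mem_filter, Finset.mem_product, Finset.mem_range]
  constructor
  · tauto
  · intro h; exact ⟨⟨(shape_bounds h).1, (shape_bounds h).2⟩, h⟩

/-- The fold used in `rightmostOne`. -/
def pick (l : List (ℕ × ℕ)) : Option (ℕ × ℕ) :=
  l.foldr (fun a b => match b with
      | none => some a
      | some b' => if b'.2 ≤ a.2 then some a else some b') none

lemma pick_spec (l : List (ℕ × ℕ)) : (l = [] ∧ pick l = none) ∨
    ∃ a, pick l = some a ∧ a ∈ l ∧ ∀ b ∈ l, b.2 ≤ a.2 := by
  induction l with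
  | nil => exact Or.inl ⟨rfl, rfl⟩
  | cons x t ih =>
    right
    rcases ih with ⟨rfl, _⟩ | ⟨a, ha, hmem, hmax⟩
    · exact ⟨x, rfl, by simp, by simp⟩
    · have hfold : pick (x :: t) = if a.2 ≤ x.2 then some x else some a := by
        unfold pick at ha ⊢
        rw [List.foldr_cons, ha]
      by_cases hle : a.2 ≤ x.2
      · refine ⟨x, by rw [hfold, if_pos hle], List.mem_cons_self, ?_⟩
        intro b hb
        rcases List.mem_cons.mp hb with rfl | hb
        · exact le_refl _
        · exact le_trans (hmax b hb) hle
      · refine ⟨a, by rw [hfold, if_neg hle], List.mem_cons_of_mem _ hmem, ?_⟩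
        intro b hb
        rcases List.mem_cons.mp hb with rfl | hb
        · omega
        · exact hmax b hb

lemma rightmostOne_spec {n : ℕ} {γ : List ℕ} (T : SSHT n γ)
    (hone : ∃ rc ∈ shapeCells γ, T.entry rc = 2) :
    ∃ p : ℕ × ℕ, rightmostOne T = some p ∧ ShiftedShape γ p ∧ T.entry p = 2 ∧
      ∀ rc, ShiftedShape γ rc → T.entry rc = 2 → rc.2 ≤ p.2 := by
  obtain ⟨rc0, hrc0, h2⟩ := hone
  have hsh0 : ShiftedShape γ rc0 := mem_shapeCells.mp hrc0
  set L := (((List.range (colBound γ + 1)).flatMap (fun r =>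
      (List.range (colBound γ + 1)).map (fun c => (r, c)))).filter
    (fun rc => decide (ShiftedShape γ rc) && decide (T.entry rc = 2))) with hL
  have hmemL : ∀ rc : ℕ × ℕ, rc ∈ L ↔ ShiftedShape γ rc ∧ T.entry rc = 2 := by
    intro rc
    constructor
    · intro h
      have h' := List.mem_filter.mp h
      simp only [Bool.and_eq_true, decide_eq_true_eq] at h'
      exact h'.2
    · rintro ⟨hs, he⟩
      apply List.mem_filter.mpr
      refine ⟨?_, by simp [hs, he]⟩
      apply List.mem_flatMap.mpr
      exact ⟨rc.1, List.mem_range.mpr (shape_bounds hs).1,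
        List.mem_map.mpr ⟨rc.2, List.mem_range.mpr (shape_bounds hs).2, rfl⟩⟩
  have hrm : rightmostOne T = pick L := rfl
  rcases pick_spec L with ⟨hnil, _⟩ | ⟨a, ha, hmem, hmax⟩
  · have h0 := (hmemL rc0).mpr ⟨hsh0, h2⟩
    rw [hnil] at h0
    simp at h0
  · obtain ⟨hs, he⟩ := (hmemL a).mp hmem
    exact ⟨a, by rw [hrm, ha], hs, he,
      fun rc h1 h2' => hmax rc ((hmemL rc).mpr ⟨h1, h2'⟩)⟩

/-- If `T ∈ SSHT_n(γ)` has at least one entry `1` (encoded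
`2`) and no entry `2'` (encoded `3`), then the queer lowering operator `f_0*`
applied to `T` yields a semistandard shifted tableau of shape `γ`, and its
weight is obtained from `wt(T)` by decreasing the first part by `1` and
increasing the second part by `1`. -/
theorem queerLower_wellDefined (n : ℕ) (γ : List ℕ) (hγ : StrictPartition γ)
    (hn : 2 ≤ n) (T : SSHT n γ)
    (hone : ∃ rc ∈ shapeCells γ, T.entry rc = 2)
    (hnotwo : ¬ ∃ rc ∈ shapeCells γ, T.entry rc = 3) :
    ∃ g, queerLowerFun T = some g ∧ (∃ S : SSHT n γ, S.entry = g) ∧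
      wtFun γ g 1 + 1 = wtFun γ T.entry 1 ∧
      wtFun γ g 2 = wtFun γ T.entry 2 + 1 ∧
      (∀ k, k ≠ 1 → k ≠ 2 → wtFun γ g k = wtFun γ T.entry k) := by
  obtain ⟨⟨r, c⟩, hrm, hsp, hep, hmax⟩ := rightmostOne_spec T hone
  set v : ℕ := if r = c then 4 else 3 with hv
  have hv34 : v = 3 ∨ v = 4 := by rw [hv]; split <;> simp
  set g : ℕ × ℕ → ℕ := fun rc => if rc = (r, c) then v else T.entry rc with hg
  have hgval : ∀ rc, rc ≠ (r, c) → g rc = T.entry rc := fun rc h => if_neg h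
  have hgrc : g (r, c) = v := if_pos rfl
  have hne3 : ∀ rc, ShiftedShape γ rc → T.entry rc ≠ 3 :=
    fun rc hs he => hnotwo ⟨rc, mem_shapeCells.mpr hs, he⟩
  have hql : queerLowerFun T = some g := by
    unfold queerLowerFun
    rw [if_neg hnotwo, hrm]
  -- the right neighbours of (r,c) in row r have entries ≥ 4
  have hright : ∀ c', c < c' → ShiftedShape γ (r, c') → 4 ≤ T.entry (r, c') := by
    intro c' hc hs
    have h2 : 2 ≤ T.entry (r, c') := hep ▸ T.row_mono r c c' hc hsp hs
    have hne2 : T.entry (r, c') ≠ 2 := by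
      intro h
      have := hmax (r, c') hs h
      simp at this
      omega
    have := hne3 (r, c') hs
    omega
  -- the cells above (r,c) in column c have entries ≥ 4
  have habove : ∀ r', r < r' → ShiftedShape γ (r', c) → 4 ≤ T.entry (r', c) := by
    intro r' hr hs
    have h2 : 2 ≤ T.entry (r', c) := hep ▸ T.col_mono r r' c hr hsp hs
    have hne2 : T.entry (r', c) ≠ 2 := by
      intro h
      have := T.col_unmarked r r' c hr hsp hs (by rw [hep, h])
      rw [hep] at this
      omega
    have := hne3 (r', c) hs
    omega
  -- if (r,c) is on the diagonal, nothing lies above it in its column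
  have hdiagabove : r = c → ∀ r', r < r' → ¬ ShiftedShape γ (r', c) := by
    rintro rfl r' hr hs
    have := hs.2.2.1
    simp at this
    omega
  refine ⟨g, hql, ⟨?_, ?_, ?_, ?_⟩⟩
  · -- g underlies a semistandard shifted tableau
    refine ⟨⟨g, ?_, ?_, ?_, ?_, ?_, ?_, ?_, ?_⟩, rfl⟩
    · intro rc hrc
      rw [hgval rc (fun h => hrc (h ▸ hsp)), T.zero_outside rc hrc]
    · intro rc hs
      by_cases h : rc = (r, c)
      · rw [h, hgrc]; omega
      · rw [hgval rc h]; exact T.pos rc hs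
    · intro rc hs
      by_cases h : rc = (r, c)
      · rw [h, hgrc]; omega
      · rw [hgval rc h]; exact T.le_two_n rc hs
    · -- row_mono
      intro r₁ c₁ c₂ hc hs1 hs2
      by_cases h1 : (r₁, c₁) = (r, c)
      · obtain ⟨rfl, rfl⟩ := Prod.mk.inj h1
        have h2 : (r₁, c₂) ≠ (r₁, c₁) := by simp; omega
        rw [hgrc, hgval _ h2]
        have := hright c₂ hc hs2
        omega
      · by_cases h2 : (r₁, c₂) = (r, c)
        · obtain ⟨rfl, rfl⟩ := Prod.mk.inj h2
          rw [hgval _ h1, hgrc]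
          have := hep ▸ T.row_mono r₁ c₁ c₂ hc hs1 hsp
          omega
        · rw [hgval _ h1, hgval _ h2]; exact T.row_mono r₁ c₁ c₂ hc hs1 hs2
    · -- col_mono
      intro r₁ r₂ c₁ hr hs1 hs2
      by_cases h1 : (r₁, c₁) = (r, c)
      · obtain ⟨rfl, rfl⟩ := Prod.mk.inj h1
        have h2 : (r₂, c₁) ≠ (r₁, c₁) := by simp; omega
        rw [hgrc, hgval _ h2]
        have := habove r₂ hr hs2
        omega
      · by_cases h2 : (r₂, c₁) = (r, c)
        · obtain ⟨rfl, rfl⟩ := Prod.mk.inj h2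
          rw [hgval _ h1, hgrc]
          have := hep ▸ T.col_mono r₁ r₂ c₁ hr hs1 hsp
          omega
        · rw [hgval _ h1, hgval _ h2]; exact T.col_mono r₁ r₂ c₁ hr hs1 hs2
    · -- col_unmarked
      intro r₁ r₂ c₁ hr hs1 hs2 heq
      by_cases h1 : (r₁, c₁) = (r, c)
      · obtain ⟨rfl, rfl⟩ := Prod.mk.inj h1
        rw [hgrc] at heq ⊢
        rcases hv34 with hv3 | hv4
        · omega
        · -- v = 4 means the changed cell is diagonal, so no cell above
          have hrc : r₁ = c₁ := by
            by_contra h; rw [hv, if_neg h] at hv4; omega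
          exact absurd hs2 (hdiagabove hrc r₂ hr)
      · by_cases h2 : (r₂, c₁) = (r, c)
        · obtain ⟨rfl, rfl⟩ := Prod.mk.inj h2
          rw [hgval _ h1, hgrc] at heq
          have := hep ▸ T.col_mono r₁ r₂ c₁ hr hs1 hsp
          omega
        · rw [hgval _ h1] at heq ⊢
          rw [hgval _ h2] at heq
          exact T.col_unmarked r₁ r₂ c₁ hr hs1 hs2 heq
    · -- row_marked
      intro r₁ c₁ c₂ hc hs1 hs2 heq
      by_cases h1 : (r₁, c₁) = (r, c)
      · obtain ⟨rfl, rfl⟩ := Prod.mk.inj h1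
        have h2 : (r₁, c₂) ≠ (r₁, c₁) := by simp; omega
        rw [hgrc] at heq ⊢
        rw [hgval _ h2] at heq
        have := hright c₂ hc hs2
        rcases hv34 with hv3 | hv4 <;> omega
      · by_cases h2 : (r₁, c₂) = (r, c)
        · obtain ⟨rfl, rfl⟩ := Prod.mk.inj h2
          rw [hgval _ h1] at heq ⊢
          rw [hgrc] at heq
          have := hep ▸ T.row_mono r₁ c₁ c₂ hc hs1 hsp
          omega
        · rw [hgval _ h1] at heq ⊢
          rw [hgval _ h2] at heq
          exact T.row_marked r₁ c₁ c₂ hc hs1 hs2 heq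
    · -- diag_unmarked
      intro r₁ hs
      by_cases h : (r₁, r₁) = (r, c)
      · obtain ⟨rfl, rfl⟩ := Prod.mk.inj h
        rw [hgrc, hv, if_pos rfl]
      · rw [hgval _ h]; exact T.diag_unmarked r₁ hs
  · -- weight in 1 drops by one
    have hmemT : (r, c) ∈ (shapeCells γ).filter
        (fun rc => T.entry rc = 2 * 1 - 1 ∨ T.entry rc = 2 * 1) :=
      Finset.mem_filter.mpr ⟨mem_shapeCells.mpr hsp, Or.inr hep⟩
    have hset : (shapeCells γ).filter
        (fun rc => T.entry rc = 2 * 1 - 1 ∨ T.entry rc = 2 * 1) =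
        insert (r, c) ((shapeCells γ).filter
          (fun rc => g rc = 2 * 1 - 1 ∨ g rc = 2 * 1)) := by
      ext rc
      simp only [Finset.mem_insert, Finset.mem_filter]
      by_cases h : rc = (r, c)
      · subst h
        simp [mem_shapeCells.mpr hsp, hep]
      · rw [hgval rc h]
        constructor
        · exact fun hh => Or.inr hh
        · rintro (rfl | hh)
          · exact absurd rfl h
          · exact hh
    have hnotin : (r, c) ∉ (shapeCells γ).filter
        (fun rc => g rc = 2 * 1 - 1 ∨ g rc = 2 * 1) := by
      simp only [Finset.mem_filter, hgrc, not_and, not_or]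
      intro _
      omega
    unfold wtFun
    rw [hset, Finset.card_insert_of_notMem hnotin]
  · -- weight in 2 goes up by one
    have hset : (shapeCells γ).filter
        (fun rc => g rc = 2 * 2 - 1 ∨ g rc = 2 * 2) =
        insert (r, c) ((shapeCells γ).filter
          (fun rc => T.entry rc = 2 * 2 - 1 ∨ T.entry rc = 2 * 2)) := by
      ext rc
      simp only [Finset.mem_insert, Finset.mem_filter]
      by_cases h : rc = (r, c)
      · subst h
        constructor
        · intro _; exact Or.inl rfl
        · intro _
          exact ⟨mem_shapeCells.mpr hsp, by rw [hgrc]; omega⟩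
      · rw [hgval rc h]
        constructor
        · exact fun hh => Or.inr hh
        · rintro (rfl | hh)
          · exact absurd rfl h
          · exact hh
    have hnotin : (r, c) ∉ (shapeCells γ).filter
        (fun rc => T.entry rc = 2 * 2 - 1 ∨ T.entry rc = 2 * 2) := by
      simp only [Finset.mem_filter, hep, not_and, not_or]
      intro _
      omega
    unfold wtFun
    rw [hset, Finset.card_insert_of_notMem hnotin]
  · -- other weights unchanged
    intro k hk1 hk2
    unfold wtFun
    congr 1
    apply Finset.filter_congr
    intro rc _
    by_cases h : rc = (r, c)
    · subst h
      rw [hgrc, hep]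
      constructor
      · intro h'; omega
      · intro h'; omega
    · rw [hgval rc h]
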